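/- Fix α ∈ (−1,0) and let z_n satisfy 1/z_n = 1 + α. Then the variance of the walk length of the self-avoiding walk on K_n at fugacity z_n satisfies var_{n,z_n}(L_n) ~ (1+α) n as n → ∞. -/

import Mathlib

open Filter Finset Real Asymptotics

/-- Number of `k`-step SAWs weight: `(z/n)^k` times the number of walks. -/
noncomputable def sawWeight (n : ℕ) (z : ℝ) (k : ℕ) : ℝ :=
  (z / n) ^ k * ((n - 1).descFactorial k)

/-- Partition function of the variable-length SAW model on `K_n`. -/
noncomputable def sawZ (n : ℕ) (z : ℝ) : ℝ := ∑ k ∈ Finset.range n, sawWeight n z k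

/-- Probability that the walk length equals `k`. -/
noncomputable def sawProb (n : ℕ) (z : ℝ) (k : ℕ) : ℝ := sawWeight n z k / sawZ n z

/-- Mean walk length. -/
noncomputable def sawMean (n : ℕ) (z : ℝ) : ℝ := ∑ k ∈ Finset.range n, (k : ℝ) * sawProb n z k

/-- Variance of the walk length. -/
noncomputable def sawVar (n : ℕ) (z : ℝ) : ℝ :=
  (∑ k ∈ Finset.range n, (k : ℝ) ^ 2 * sawProb n z k) - (sawMean n z) ^ 2

/-- Tail distribution `P(L_n > x)` for real `x`. -/
noncomputable def sawTail (n : ℕ) (z : ℝ) (x : ℝ) : ℝ :=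
  ∑ k ∈ Finset.range n, if x < (k : ℝ) then sawProb n z k else 0

/-- Regularised incomplete gamma function at integer first argument,
    `Q(n, ν) = e^{-ν} ∑_{j<n} ν^j/j!`. -/
noncomputable def Qreg (n : ℕ) (ν : ℝ) : ℝ :=
  Real.exp (-ν) * ∑ j ∈ Finset.range n, ν ^ j / (Nat.factorial j)

/-- `H_n(ν) = Γ(n) Q(n,ν) / (ν^n e^{-ν})`. -/
noncomputable def Hfun (n : ℕ) (ν : ℝ) : ℝ :=
  Real.Gamma n * Qreg n ν / (ν ^ n * Real.exp (-ν))

/-- Standard normal density. -/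
noncomputable def normpdf (x : ℝ) : ℝ := Real.exp (-x ^ 2 / 2) / Real.sqrt (2 * Real.pi)

/-- Standard normal tail distribution `Φ̄`. -/
noncomputable def normTail (x : ℝ) : ℝ := ∫ t in Set.Ioi x, normpdf t

/-- `η(λ) = sgn(λ-1) √(2(λ-1-log λ))`. -/
noncomputable def etaF (l : ℝ) : ℝ := Real.sign (l - 1) * Real.sqrt (2 * (l - 1 - Real.log l))

/-- `Γ*(n) = √(n/(2π)) e^n n^{-n} Γ(n)`. -/
noncomputable def gammaStar (n : ℕ) : ℝ :=
  Real.sqrt (n / (2 * Real.pi)) * Real.exp n * ((n : ℝ) ^ n)⁻¹ * Real.Gamma n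

/-- The operator `(ν d/dν)^l`. -/
noncomputable def thetaOp : ℕ → (ℝ → ℝ) → (ℝ → ℝ)
  | 0, f => f
  | (l + 1), f => fun ν => ν * deriv (thetaOp l f) ν

/-- Partial exponential sum. -/
noncomputable def auxP (ν : ℝ) (n : ℕ) : ℝ := ∑ j ∈ Finset.range n, ν ^ j / (Nat.factorial j : ℝ)

lemma auxP_succ (ν : ℝ) (n : ℕ) :
    auxP ν (n + 1) = auxP ν n + ν ^ n / (Nat.factorial n : ℝ) :=
  Finset.sum_range_succ _ n

lemma auxP_pos {ν : ℝ} (hν : 0 ≤ ν) {n : ℕ} (hn : 1 ≤ n) : 0 < auxP ν n := by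
  have h0 : (0:ℕ) ∈ Finset.range n := Finset.mem_range.mpr hn
  have : (1:ℝ) ≤ auxP ν n := by
    have := Finset.single_le_sum (f := fun j => ν ^ j / (Nat.factorial j : ℝ))
      (fun j _ => by positivity) h0
    simpa [auxP] using this
  linarith

lemma term_le_auxP {ν : ℝ} (hν : 0 ≤ ν) {j n : ℕ} (hj : j < n) :
    ν ^ j / (Nat.factorial j : ℝ) ≤ auxP ν n :=
  Finset.single_le_sum (f := fun j => ν ^ j / (Nat.factorial j : ℝ))
    (fun j _ => by positivity) (Finset.mem_range.mpr hj)

lemma auxP_mono {ν : ℝ} (hν : 0 ≤ ν) {a b : ℕ} (h : a ≤ b) : auxP ν a ≤ auxP ν b :=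
  Finset.sum_le_sum_of_subset_of_nonneg (Finset.range_subset_range.mpr h)
    (fun j _ _ => by positivity)

lemma auxJ1 (ν : ℝ) (n : ℕ) :
    ∑ j ∈ Finset.range n, (j : ℝ) * (ν ^ j / (Nat.factorial j : ℝ)) = ν * auxP ν (n - 1) := by
  cases n with
  | zero => simp [auxP]
  | succ k =>
    rw [Finset.sum_range_succ']
    have hterm : ∀ i : ℕ, ((i + 1 : ℕ) : ℝ) * (ν ^ (i+1) / (Nat.factorial (i+1) : ℝ))
        = ν * (ν ^ i / (Nat.factorial i : ℝ)) := by
      intro i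
      have h1 : (Nat.factorial (i+1) : ℝ) = (i+1) * Nat.factorial i := by
        rw [Nat.factorial_succ]; push_cast; ring
      have h2 : (Nat.factorial i : ℝ) ≠ 0 := by positivity
      have h3 : ((i:ℝ) + 1) ≠ 0 := by positivity
      rw [h1, pow_succ]
      push_cast
      field_simp
    simp only [hterm]
    simp [auxP, Finset.mul_sum]

lemma auxJ2 (ν : ℝ) (n : ℕ) :
    ∑ j ∈ Finset.range n, ((j : ℝ) * ((j : ℝ) - 1)) * (ν ^ j / (Nat.factorial j : ℝ))
      = ν ^ 2 * auxP ν (n - 2) := by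
  cases n with
  | zero => simp [auxP]
  | succ k =>
    rw [Finset.sum_range_succ']
    have hterm : ∀ i : ℕ, (((i + 1 : ℕ) : ℝ) * (((i + 1 : ℕ) : ℝ) - 1)) *
          (ν ^ (i+1) / (Nat.factorial (i+1) : ℝ))
        = ν * ((i : ℝ) * (ν ^ i / (Nat.factorial i : ℝ))) := by
      intro i
      have h1 : (Nat.factorial (i+1) : ℝ) = (i+1) * Nat.factorial i := by
        rw [Nat.factorial_succ]; push_cast; ring
      have h2 : (Nat.factorial i : ℝ) ≠ 0 := by positivity
      have h3 : ((i:ℝ) + 1) ≠ 0 := by positivity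
      rw [h1, pow_succ]
      push_cast
      field_simp
      ring
    simp only [hterm]
    rw [← Finset.mul_sum, auxJ1]
    have : k + 1 - 2 = k - 1 := by omega
    rw [this]
    ring

lemma sum_weight_eq (n : ℕ) {ν z : ℝ} (hν : 0 < ν) (hz : z / n = ν⁻¹) (g : ℕ → ℝ) :
    ∑ k ∈ Finset.range n, g k * sawWeight n z k
      = (ν⁻¹) ^ (n-1) * ((n-1).factorial : ℝ) *
        ∑ j ∈ Finset.range n, g (n-1-j) * (ν ^ j / ((j.factorial : ℕ) : ℝ)) := by
  rw [Finset.mul_sum, ← Finset.sum_range_reflect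
    (fun j => (ν⁻¹) ^ (n-1) * ((n-1).factorial : ℝ) *
      (g (n-1-j) * (ν ^ j / ((j.factorial : ℕ) : ℝ)))) n]
  apply Finset.sum_congr rfl
  intro k hk
  have hkn : k < n := Finset.mem_range.mp hk
  have hk' : k ≤ n - 1 := by omega
  have h1 : n - 1 - (n - 1 - k) = k := by omega
  simp only [h1]
  unfold sawWeight
  rw [hz]
  have hfac : ((n-1-k).factorial : ℝ) * ((n-1).descFactorial k : ℝ) = ((n-1).factorial : ℝ) := by
    exact_mod_cast congrArg (fun x : ℕ => (x : ℝ)) (Nat.factorial_mul_descFactorial hk')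
  have hdf : (((n-1).descFactorial k : ℕ) : ℝ) = ((n-1).factorial : ℝ) / ((n-1-k).factorial : ℝ) := by
    rw [eq_div_iff (by positivity)]
    rw [mul_comm]; exact hfac
  have key : (ν⁻¹) ^ k = (ν⁻¹) ^ (n-1) * ν ^ (n-1-k) := by
    have h2 : (ν⁻¹) ^ (n-1) = (ν⁻¹) ^ k * (ν⁻¹) ^ (n-1-k) := by
      rw [← pow_add]; congr 1; omega
    rw [h2, mul_assoc, ← mul_pow, inv_mul_cancel₀ hν.ne', one_pow, mul_one]
  rw [hdf, key]
  ring

lemma sawZ_eq (n : ℕ) {ν z : ℝ} (hν : 0 < ν) (hz : z / n = ν⁻¹) :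
    sawZ n z = (ν⁻¹) ^ (n-1) * ((n-1).factorial : ℝ) * auxP ν n := by
  have h := sum_weight_eq n hν hz (fun _ => 1)
  simpa [sawZ, auxP] using h

lemma sawS1_eq (n : ℕ) {ν z : ℝ} (hν : 0 < ν) (hz : z / n = ν⁻¹) :
    ∑ k ∈ Finset.range n, (k : ℝ) * sawWeight n z k
      = (ν⁻¹) ^ (n-1) * ((n-1).factorial : ℝ) *
        (((n-1 : ℕ) : ℝ) * auxP ν n - ν * auxP ν (n-1)) := by
  rw [sum_weight_eq n hν hz (fun k => (k : ℝ))]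
  congr 1
  have hcong : ∀ j ∈ Finset.range n, ((n-1-j : ℕ) : ℝ) * (ν ^ j / ((j.factorial : ℕ) : ℝ))
      = ((n-1 : ℕ) : ℝ) * (ν ^ j / (j.factorial : ℝ)) - (j : ℝ) * (ν ^ j / (j.factorial : ℝ)) := by
    intro j hj
    have hjn : j < n := Finset.mem_range.mp hj
    have hj' : j ≤ n - 1 := by omega
    rw [Nat.cast_sub hj']
    ring
  rw [Finset.sum_congr rfl hcong, Finset.sum_sub_distrib, ← Finset.mul_sum, auxJ1]
  rfl

lemma sawS2_eq (n : ℕ) {ν z : ℝ} (hν : 0 < ν) (hz : z / n = ν⁻¹) :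
    ∑ k ∈ Finset.range n, (k : ℝ) ^ 2 * sawWeight n z k
      = (ν⁻¹) ^ (n-1) * ((n-1).factorial : ℝ) *
        (((n-1 : ℕ) : ℝ) ^ 2 * auxP ν n - 2 * ((n-1 : ℕ) : ℝ) * (ν * auxP ν (n-1))
          + (ν ^ 2 * auxP ν (n-2) + ν * auxP ν (n-1))) := by
  rw [sum_weight_eq n hν hz (fun k => (k : ℝ) ^ 2)]
  congr 1
  have hcong : ∀ j ∈ Finset.range n, ((n-1-j : ℕ) : ℝ) ^ 2 * (ν ^ j / ((j.factorial : ℕ) : ℝ))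
      = ((n-1 : ℕ) : ℝ) ^ 2 * (ν ^ j / (j.factorial : ℝ))
        - 2 * ((n-1 : ℕ) : ℝ) * ((j : ℝ) * (ν ^ j / (j.factorial : ℝ)))
        + (((j : ℝ) * ((j : ℝ) - 1)) * (ν ^ j / (j.factorial : ℝ))
           + (j : ℝ) * (ν ^ j / (j.factorial : ℝ))) := by
    intro j hj
    have hjn : j < n := Finset.mem_range.mp hj
    have hj' : j ≤ n - 1 := by omega
    rw [Nat.cast_sub hj']
    ring
  rw [Finset.sum_congr rfl hcong]
  rw [Finset.sum_add_distrib, Finset.sum_sub_distrib, Finset.sum_add_distrib,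
    ← Finset.mul_sum, ← Finset.mul_sum, auxJ1, auxJ2]
  rfl

lemma var_diff (n : ℕ) (hn : 2 ≤ n) {ν z : ℝ} (hν : 0 < ν) (hz : z / n = ν⁻¹) :
    sawVar n z / ν - 1 =
      -((ν ^ (n-1) / ((n-1).factorial : ℝ)) / auxP ν n)
      + (ν - ((n-1 : ℕ) : ℝ)) * ((ν ^ (n-1) / ((n-1).factorial : ℝ)) / auxP ν n)
          * (auxP ν (n-1) / auxP ν n)
      - ((n-1 : ℕ) : ℝ) * ((ν ^ (n-1) / ((n-1).factorial : ℝ)) / auxP ν n) ^ 2 := by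
  set Pn : ℝ := auxP ν n with hPndef
  set P1 : ℝ := auxP ν (n-1) with hP1def
  set P2 : ℝ := auxP ν (n-2) with hP2def
  set b : ℝ := ν ^ (n-1) / ((n-1).factorial : ℝ) with hbdef
  set d : ℝ := ν ^ (n-2) / ((n-2).factorial : ℝ) with hddef
  set C : ℝ := (ν⁻¹) ^ (n-1) * ((n-1).factorial : ℝ) with hCdef
  have hC : 0 < C := by positivity
  have hPn : 0 < Pn := auxP_pos hν.le (by omega)
  have hZ : sawZ n z = C * Pn := sawZ_eq n hν hz
  have hZpos : 0 < sawZ n z := by rw [hZ]; positivity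
  set X1 : ℝ := ((n-1 : ℕ) : ℝ) * Pn - ν * P1 with hX1def
  set X2 : ℝ := ((n-1 : ℕ) : ℝ) ^ 2 * Pn - 2 * ((n-1 : ℕ) : ℝ) * (ν * P1) + (ν ^ 2 * P2 + ν * P1)
    with hX2def
  have hmean : sawMean n z = X1 / Pn := by
    rw [sawMean]
    simp only [sawProb, ← mul_div_assoc, ← Finset.sum_div]
    rw [sawS1_eq n hν hz, hZ, hX1def]
    rw [mul_div_mul_left _ _ hC.ne']
  have hk2 : ∑ k ∈ Finset.range n, (k : ℝ) ^ 2 * sawProb n z k = X2 / Pn := by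
    simp only [sawProb, ← mul_div_assoc, ← Finset.sum_div]
    rw [sawS2_eq n hν hz, hZ, hX2def]
    rw [mul_div_mul_left _ _ hC.ne']
  have hvar0 : sawVar n z = X2 / Pn - (X1 / Pn) ^ 2 := by
    rw [sawVar, hk2, hmean]
  -- relations
  have hPnP1 : Pn = P1 + b := by
    have h := auxP_succ ν (n-1)
    rw [show n - 1 + 1 = n by omega] at h
    rw [hPndef, h, hP1def, hbdef]
  have hP1P2 : P1 = P2 + d := by
    have h := auxP_succ ν (n-2)
    rw [show n - 2 + 1 = n - 1 by omega] at h
    rw [hP1def, h, hP2def, hddef]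
  have hνd : ν * d = ((n-1 : ℕ) : ℝ) * b := by
    rw [hddef, hbdef]
    have hfac : ((n-1).factorial : ℝ) = ((n-1 : ℕ) : ℝ) * ((n-2).factorial : ℝ) := by
      rw [show n - 1 = (n - 2) + 1 by omega, Nat.factorial_succ]
      rw [show n - 2 + 1 = n - 1 by omega]
      push_cast; ring
    have hpow : ν ^ (n-1) = ν * ν ^ (n-2) := by
      rw [show n - 1 = (n - 2) + 1 by omega, pow_succ]; ring
    have hf2 : ((n-2).factorial : ℝ) ≠ 0 := by positivity
    have hm1 : ((n-1 : ℕ) : ℝ) ≠ 0 := by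
      have h1 : 0 < n - 1 := by omega
      have h2 : (0:ℝ) < ((n-1 : ℕ) : ℝ) := by exact_mod_cast h1
      exact h2.ne'
    rw [hfac, hpow]
    rw [← mul_div_assoc, ← mul_div_assoc, mul_div_mul_left _ _ hm1]
  have hP1b : P1 = Pn - b := by linarith
  have hd' : d = ((n-1 : ℕ) : ℝ) * b / ν := by
    rw [eq_div_iff hν.ne']; linarith
  have hP2b : P2 = Pn - b - ((n-1 : ℕ) : ℝ) * b / ν := by
    rw [← hd']; linarith
  rw [hvar0, hX2def, hX1def, hP2b, hP1b]
  field_simp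
  ring

lemma delta_le (n s : ℕ) (hn : 1 ≤ n) (hs : s < n) {ν : ℝ} (hν : 0 < ν) :
    (ν ^ (n-1) / ((n-1).factorial : ℝ)) / auxP ν n ≤ (ν / (s+1 : ℕ)) ^ (n-1-s) := by
  have hsm : s ≤ n - 1 := by omega
  have hterm : ν ^ s / (s.factorial : ℝ) ≤ auxP ν n := term_le_auxP hν.le hs
  have htermpos : (0:ℝ) < ν ^ s / (s.factorial : ℝ) := by positivity
  have h1 : (ν ^ (n-1) / ((n-1).factorial : ℝ)) / auxP ν n
      ≤ (ν ^ (n-1) / ((n-1).factorial : ℝ)) / (ν ^ s / (s.factorial : ℝ)) := by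
    gcongr
  have hDnat := Nat.factorial_mul_descFactorial (show n-1-s ≤ n-1 from Nat.sub_le _ _)
  rw [show n - 1 - (n - 1 - s) = s by omega] at hDnat
  -- hDnat : s.factorial * (n-1).descFactorial (n-1-s) = (n-1).factorial
  have hDpos : 0 < (n-1).descFactorial (n-1-s) := by
    rcases Nat.eq_zero_or_pos ((n-1).descFactorial (n-1-s)) with h | h
    · exfalso
      have := Nat.descFactorial_eq_zero_iff_lt.mp h
      omega
    · exact h
  have hDposR : (0:ℝ) < ((n-1).descFactorial (n-1-s) : ℝ) := by exact_mod_cast hDpos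
  have hpow : ν ^ (n-1) = ν ^ s * ν ^ (n-1-s) := by
    rw [← pow_add]; congr 1; omega
  have h2 : (ν ^ (n-1) / ((n-1).factorial : ℝ)) / (ν ^ s / (s.factorial : ℝ))
      = ν ^ (n-1-s) / (((n-1).descFactorial (n-1-s) : ℕ) : ℝ) := by
    have hfacR : (s.factorial : ℝ) * (((n-1).descFactorial (n-1-s) : ℕ) : ℝ)
        = ((n-1).factorial : ℝ) := by exact_mod_cast congrArg (fun x : ℕ => (x:ℝ)) hDnat
    have hsf : (s.factorial : ℝ) ≠ 0 := by positivity
    rw [hpow, ← hfacR]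
    field_simp
  have h3 : ν ^ (n-1-s) / (((n-1).descFactorial (n-1-s) : ℕ) : ℝ) ≤ (ν / (s+1 : ℕ)) ^ (n-1-s) := by
    rw [div_pow]
    have hle : ((s+1 : ℕ) : ℝ) ^ (n-1-s) ≤ (((n-1).descFactorial (n-1-s) : ℕ) : ℝ) := by
      have := Nat.pow_sub_le_descFactorial (n-1) (n-1-s)
      rw [show n - 1 + 1 - (n-1-s) = s + 1 by omega] at this
      exact_mod_cast this
    gcongr
  calc (ν ^ (n-1) / ((n-1).factorial : ℝ)) / auxP ν n
      ≤ (ν ^ (n-1) / ((n-1).factorial : ℝ)) / (ν ^ s / (s.factorial : ℝ)) := h1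
    _ = ν ^ (n-1-s) / (((n-1).descFactorial (n-1-s) : ℕ) : ℝ) := h2
    _ ≤ (ν / (s+1 : ℕ)) ^ (n-1-s) := h3

open Topology in
theorem var_low_temp (α : ℝ) (h1 : -1 < α) (h2 : α < 0) :
    (fun n : ℕ => sawVar n (1 / (1 + α))) ~[atTop] (fun n : ℕ => (1 + α) * n) := by
  have hα : (0:ℝ) < 1 + α := by linarith
  have h12 : (0:ℝ) < 1 + α/2 := by linarith
  have hne : ∀ᶠ n : ℕ in atTop, (1 + α) * (n:ℝ) ≠ 0 := by
    filter_upwards [eventually_ge_atTop 1] with n hn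
    have hn0 : (0:ℝ) < (n:ℝ) := by exact_mod_cast Nat.lt_of_lt_of_le Nat.zero_lt_one hn
    positivity
  rw [isEquivalent_iff_tendsto_one hne]
  set ρ : ℝ := (1 + α) / (1 + α/2) with hρdef
  have hρ0 : 0 < ρ := by positivity
  have hρ1 : ρ < 1 := by rw [hρdef, div_lt_one h12]; linarith
  have hlog : Real.log ρ < 0 := Real.log_neg hρ0 hρ1
  set c : ℝ := (α/2) * Real.log ρ with hcdef
  have hc : 0 < c := mul_pos_of_neg_of_neg (by linarith) hlog
  -- the dominating sequence tends to zero
  have hg0 : Tendsto (fun n : ℕ => (n:ℝ) * Real.exp (-(c * n))) atTop (𝓝 0) := by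
    have ha : Tendsto (fun x : ℝ => x * Real.exp (-x)) atTop (𝓝 0) := by
      simpa using tendsto_pow_mul_exp_neg_atTop_nhds_zero 1
    have hb : Tendsto (fun n : ℕ => c * (n:ℝ)) atTop atTop :=
      Tendsto.const_mul_atTop hc tendsto_natCast_atTop_atTop
    have h3 : Tendsto (fun n : ℕ => (c * (n:ℝ)) * Real.exp (-(c * (n:ℝ)))) atTop (𝓝 0) := ha.comp hb
    have h4 := h3.const_mul (1/c)
    have heq : (fun n : ℕ => (n:ℝ) * Real.exp (-(c * n)))
        = fun n : ℕ => (1/c) * ((c * (n:ℝ)) * Real.exp (-(c * (n:ℝ)))) := by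
      funext n
      field_simp
    rw [heq]
    simpa using h4
  have hg : Tendsto (fun n : ℕ => 3 * (n:ℝ) * ρ ^ (((-α)/2) * (n:ℝ) - 1)) atTop (𝓝 0) := by
    have heq2 : (fun n : ℕ => 3 * (n:ℝ) * ρ ^ (((-α)/2) * (n:ℝ) - 1))
        = fun n : ℕ => (3 * Real.exp (-Real.log ρ)) * ((n:ℝ) * Real.exp (-(c * n))) := by
      funext n
      rw [Real.rpow_def_of_pos hρ0]
      rw [show Real.log ρ * (((-α)/2) * (n:ℝ) - 1) = (-Real.log ρ) + (-(c * (n:ℝ))) by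
        rw [hcdef]; ring]
      rw [Real.exp_add]
      ring
    rw [heq2]
    simpa using hg0.const_mul (3 * Real.exp (-Real.log ρ))
  -- eventual bounds
  have hEv2 : ∀ᶠ n : ℕ in atTop, (1:ℝ) < ((-α)/2) * (n:ℝ) :=
    (Tendsto.const_mul_atTop (by linarith : (0:ℝ) < (-α)/2) tendsto_natCast_atTop_atTop).eventually_gt_atTop 1
  have hEv3 : ∀ᶠ n : ℕ in atTop, (1:ℝ) ≤ (1 + α) * (n:ℝ) :=
    (Tendsto.const_mul_atTop hα tendsto_natCast_atTop_atTop).eventually_ge_atTop 1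
  have key : Tendsto (fun n : ℕ => sawVar n (1/(1+α)) / ((1+α) * (n:ℝ)) - 1) atTop (𝓝 0) := by
    apply squeeze_zero_norm' ?_ hg
    filter_upwards [eventually_ge_atTop 2, hEv2, hEv3] with n hn2 hn2' hn3
    have hn0 : (0:ℝ) < (n:ℝ) := by
      have : (0:ℕ) < n := by omega
      exact_mod_cast this
    set ν : ℝ := (1 + α) * (n:ℝ) with hνdef
    have hν : 0 < ν := by positivity
    have hz : (1/(1+α)) / (n:ℝ) = ν⁻¹ := by
      rw [div_div, one_div]
    -- the cut point
    set t : ℕ := ⌈((-α)/2) * (n:ℝ)⌉₊ with htdef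
    have ht2 : 2 ≤ t := by
      have : 1 < t := Nat.lt_ceil.mpr (by exact_mod_cast hn2')
      omega
    have htlow : ((-α)/2) * (n:ℝ) ≤ (t:ℝ) := Nat.le_ceil _
    have htup : (t:ℝ) < ((-α)/2) * (n:ℝ) + 1 := Nat.ceil_lt_add_one (by positivity)
    have htn : t < n := by
      have h5 : ((-α)/2) * (n:ℝ) + 1 ≤ (n:ℝ) := by nlinarith
      have : (t:ℝ) < (n:ℝ) := lt_of_lt_of_le htup h5
      exact_mod_cast this
    set s : ℕ := n - t with hsdef
    have hs : s < n := by omega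
    have hscast : ((s:ℕ):ℝ) = (n:ℝ) - (t:ℝ) := by
      rw [hsdef]; push_cast [Nat.cast_sub htn.le]; ring
    -- bound on delta
    set δ : ℝ := (ν ^ (n-1) / ((n-1).factorial : ℝ)) / auxP ν n with hδdef
    have hPn : 0 < auxP ν n := auxP_pos hν.le (by omega)
    have hδ0 : 0 ≤ δ := by
      rw [hδdef]; positivity
    have hδ1 : δ ≤ 1 := by
      rw [hδdef, div_le_one hPn]
      exact term_le_auxP hν.le (by omega)
    have hδle : δ ≤ (ν / ((s+1 : ℕ):ℝ)) ^ (n-1-s) := delta_le n s (by omega) hs hν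
    have hs1 : (1 + α/2) * (n:ℝ) ≤ ((s+1 : ℕ):ℝ) := by
      push_cast
      rw [hscast]
      nlinarith
    have hbase : ν / ((s+1 : ℕ):ℝ) ≤ ρ := by
      have hmid : ν / ((s+1 : ℕ):ℝ) ≤ ν / ((1 + α/2) * (n:ℝ)) := by
        gcongr
      have heqρ : ν / ((1 + α/2) * (n:ℝ)) = ρ := by
        rw [hνdef, hρdef, mul_comm (1+α) (n:ℝ), mul_comm (1+α/2) (n:ℝ),
          mul_div_mul_left _ _ hn0.ne']
      linarith [hmid, heqρ.le]
    have hδρ : δ ≤ ρ ^ (n-1-s) := by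
      calc δ ≤ (ν / ((s+1 : ℕ):ℝ)) ^ (n-1-s) := hδle
        _ ≤ ρ ^ (n-1-s) := by
            gcongr
    have hts : n - 1 - s = t - 1 := by omega
    have hexp : ρ ^ (t-1 : ℕ) ≤ ρ ^ (((-α)/2) * (n:ℝ) - 1) := by
      rw [← Real.rpow_natCast ρ (t-1)]
      apply Real.rpow_le_rpow_of_exponent_ge hρ0 hρ1.le
      rw [Nat.cast_sub (by omega : 1 ≤ t)]
      simp only [Nat.cast_one]
      linarith
    have hδfinal : δ ≤ ρ ^ (((-α)/2) * (n:ℝ) - 1) := by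
      rw [hts] at hδρ
      exact hδρ.trans hexp
    -- the difference formula
    have hdiff := var_diff n hn2 hν hz
    rw [Real.norm_eq_abs, hdiff, ← hδdef]
    have hP1pos : 0 < auxP ν (n-1) := auxP_pos hν.le (by omega)
    have hP1le : auxP ν (n-1) ≤ auxP ν n := auxP_mono hν.le (by omega)
    set r : ℝ := auxP ν (n-1) / auxP ν n with hrdef
    have hr0 : 0 ≤ r := by rw [hrdef]; positivity
    have hr1 : r ≤ 1 := by rw [hrdef, div_le_one hPn]; exact hP1le
    set m : ℝ := ((n-1 : ℕ) : ℝ) with hmdef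
    have hm0 : 0 ≤ m := by rw [hmdef]; positivity
    have hmn : m ≤ (n:ℝ) := by
      rw [hmdef]
      exact_mod_cast Nat.sub_le n 1
    have hν0 : 0 ≤ ν := hν.le
    have hνn : ν ≤ (n:ℝ) := by
      rw [hνdef]
      exact mul_le_of_le_one_left hn0.le (by linarith)
    have hn1 : (1:ℝ) ≤ (n:ℝ) := by exact_mod_cast (by omega : 1 ≤ n)
    clear_value ν t s δ r m
    have h2 : |(ν - m) * δ * r| ≤ (n:ℝ) * δ := by
      have he : |(ν - m) * δ * r| = |ν - m| * δ * r := by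
        rw [abs_mul, abs_mul, abs_of_nonneg hδ0, abs_of_nonneg hr0]
      have habs : |ν - m| ≤ (n:ℝ) := abs_le.mpr ⟨by linarith, by linarith⟩
      rw [he]
      calc |ν - m| * δ * r ≤ |ν - m| * δ * 1 := by
            gcongr
        _ = |ν - m| * δ := by ring
        _ ≤ (n:ℝ) * δ := by gcongr
    have h3 : |m * δ ^ 2| ≤ (n:ℝ) * δ := by
      rw [abs_of_nonneg (by positivity)]
      calc m * δ ^ 2 ≤ (n:ℝ) * δ ^ 2 := by gcongr
        _ = (n:ℝ) * (δ * δ) := by ring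
        _ ≤ (n:ℝ) * (1 * δ) := by
            have : δ * δ ≤ 1 * δ := mul_le_mul_of_nonneg_right hδ1 hδ0
            gcongr
        _ = (n:ℝ) * δ := by ring
    have h4 : |(-δ) + (ν - m) * δ * r - m * δ ^ 2|
        ≤ |(-δ)| + |(ν - m) * δ * r| + |m * δ ^ 2| := by
      calc |(-δ) + (ν - m) * δ * r - m * δ ^ 2|
          ≤ |(-δ) + (ν - m) * δ * r| + |m * δ ^ 2| := by
            rw [sub_eq_add_neg]
            exact (abs_add_le _ _).trans (by rw [abs_neg])
        _ ≤ |(-δ)| + |(ν - m) * δ * r| + |m * δ ^ 2| := by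
            have := abs_add_le (-δ) ((ν - m) * δ * r)
            linarith
    have h5 : |(-δ)| = δ := by rw [abs_neg, abs_of_nonneg hδ0]
    have hδnδ : δ ≤ (n:ℝ) * δ := le_mul_of_one_le_left hδ0 hn1
    have h6 : |(-δ) + (ν - m) * δ * r - m * δ ^ 2| ≤ 3 * (n:ℝ) * δ := by
      rw [h5] at h4
      linarith
    calc |(-δ) + (ν - m) * δ * r - m * δ ^ 2| ≤ 3 * (n:ℝ) * δ := h6
      _ ≤ 3 * (n:ℝ) * ρ ^ (((-α)/2) * (n:ℝ) - 1) := by gcongr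
  have final : Tendsto (fun n : ℕ => sawVar n (1/(1+α)) / ((1+α) * (n:ℝ))) atTop (𝓝 1) :=
    tendsto_sub_nhds_zero_iff.mp key
  exact final
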